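/- Let φ : M_m(ℂ) → M_n(ℂ) be a positive linear map which is unital (φ(I) = I) and irreducible (every matrix in M_n(ℂ) commuting with φ(a) for all a ∈ M_m(ℂ) is a scalar multiple of the identity). If ψ : M_m(ℂ) → M_n(ℂ) is a positive linear map and X ∈ M_n(ℂ) satisfies ψ(a) = X·φ(a) for all a ∈ M_m(ℂ), then X = λI for some λ ≥ 0, and hence ψ = λφ. -/

import Mathlib

open Matrix ComplexOrder

noncomputable section

/-- A linear map between matrix algebras is positive if it sends positive
semidefinite matrices to positive semidefinite matrices. -/
def IsPosMap {m n : ℕ} (φ : Matrix (Fin m) (Fin m) ℂ →ₗ[ℂ] Matrix (Fin n) (Fin n) ℂ) : Prop :=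
  ∀ a : Matrix (Fin m) (Fin m) ℂ, a.PosSemidef → (φ a).PosSemidef

/-- A positive linear map `φ` is exposed (generates an exposed ray of the cone of
positive maps) if every positive map `ψ` such that `⟨η, φ(a) η⟩ = 0` implies
`⟨η, ψ(a) η⟩ = 0` (for `a` positive semidefinite) is a nonnegative multiple of `φ`. -/
def IsExposedMap {m n : ℕ} (φ : Matrix (Fin m) (Fin m) ℂ →ₗ[ℂ] Matrix (Fin n) (Fin n) ℂ) :
    Prop :=
  IsPosMap φ ∧
    ∀ ψ : Matrix (Fin m) (Fin m) ℂ →ₗ[ℂ] Matrix (Fin n) (Fin n) ℂ, IsPosMap ψ →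
      (∀ a : Matrix (Fin m) (Fin m) ℂ, a.PosSemidef → ∀ η : Fin n → ℂ,
        star η ⬝ᵥ (φ a) *ᵥ η = 0 → star η ⬝ᵥ (ψ a) *ᵥ η = 0) →
      ∃ c : ℝ, 0 ≤ c ∧ ψ = (c : ℂ) • φ

/-- The map `Ad_s : x ↦ s* x s`. -/
def adMap {m n : ℕ} (s : Matrix (Fin m) (Fin n) ℂ) :
    Matrix (Fin m) (Fin m) ℂ →ₗ[ℂ] Matrix (Fin n) (Fin n) ℂ where
  toFun x := sᴴ * x * s
  map_add' x y := by simp [Matrix.add_mul, Matrix.mul_add]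
  map_smul' c x := by simp [Matrix.smul_mul, Matrix.mul_smul]

/-- The transpose map on matrices, as a linear map. -/
def transposeLM (m : ℕ) : Matrix (Fin m) (Fin m) ℂ →ₗ[ℂ] Matrix (Fin m) (Fin m) ℂ where
  toFun x := xᵀ
  map_add' x y := Matrix.transpose_add x y
  map_smul' c x := by simp

/-- Every Hermitian matrix is a difference of two positive semidefinite matrices. -/
lemma isHermitian_exists_psd_sub {k : ℕ} {h : Matrix (Fin k) (Fin k) ℂ}
    (hh : h.IsHermitian) :
    ∃ p q : Matrix (Fin k) (Fin k) ℂ, p.PosSemidef ∧ q.PosSemidef ∧ h = p - q := by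
  classical
  let U : Matrix (Fin k) (Fin k) ℂ := hh.eigenvectorUnitary
  refine ⟨U * Matrix.diagonal (fun i => ((max (hh.eigenvalues i) 0 : ℝ) : ℂ)) * Uᴴ,
          U * Matrix.diagonal (fun i => ((max (-hh.eigenvalues i) 0 : ℝ) : ℂ)) * Uᴴ,
          ?_, ?_, ?_⟩
  · exact Matrix.PosSemidef.mul_mul_conjTranspose_same
      (Matrix.posSemidef_diagonal_iff.mpr fun i => Complex.zero_le_real.mpr (le_max_right _ _)) U
  · exact Matrix.PosSemidef.mul_mul_conjTranspose_same
      (Matrix.posSemidef_diagonal_iff.mpr fun i => Complex.zero_le_real.mpr (le_max_right _ _)) U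
  · have hfun : (fun i => ((max (hh.eigenvalues i) 0 : ℝ) : ℂ)
          - ((max (-hh.eigenvalues i) 0 : ℝ) : ℂ)) = RCLike.ofReal ∘ hh.eigenvalues := by
      funext i
      simp only [Function.comp_apply]
      rw [← Complex.ofReal_sub]
      congr 1
      rcases le_or_gt 0 (hh.eigenvalues i) with h0 | h0
      · rw [max_eq_left h0, max_eq_right (by linarith), sub_zero]
        exact (Algebra.algebraMap_self_apply _).symm
      · rw [max_eq_right h0.le, max_eq_left (by linarith), zero_sub, neg_neg]
        exact (Algebra.algebraMap_self_apply _).symm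
    have hdiag : Matrix.diagonal (fun i => ((max (hh.eigenvalues i) 0 : ℝ) : ℂ))
        - Matrix.diagonal (fun i => ((max (-hh.eigenvalues i) 0 : ℝ) : ℂ))
        = Matrix.diagonal (RCLike.ofReal ∘ hh.eigenvalues) := by
      rw [Matrix.diagonal_sub]
      exact congrArg Matrix.diagonal hfun
    calc h = U * Matrix.diagonal (RCLike.ofReal ∘ hh.eigenvalues) * Uᴴ := hh.spectral_theorem
    _ = _ := by rw [← hdiag, Matrix.mul_sub, Matrix.sub_mul]

/-- A positive map sends Hermitian matrices to Hermitian matrices. -/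
lemma isPosMap_isHermitian {m n : ℕ}
    {φ : Matrix (Fin m) (Fin m) ℂ →ₗ[ℂ] Matrix (Fin n) (Fin n) ℂ} (hφ : IsPosMap φ)
    {a : Matrix (Fin m) (Fin m) ℂ} (ha : a.IsHermitian) : (φ a).IsHermitian := by
  obtain ⟨p, q, hp, hq, rfl⟩ := isHermitian_exists_psd_sub ha
  rw [map_sub]
  exact (hφ p hp).isHermitian.sub (hφ q hq).isHermitian

/-- If `φ : M_m(ℂ) → M_n(ℂ)` is a unital irreducible positive map, `ψ` is a positive
map, and `X ∈ M_n(ℂ)` satisfies `ψ(a) = X φ(a)` for all `a`, then `X = λ I` for some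
`λ ≥ 0` and hence `ψ = λ φ`. -/
theorem scalar_of_factor_unital_irreducible {m n : ℕ}
    (φ ψ : Matrix (Fin m) (Fin m) ℂ →ₗ[ℂ] Matrix (Fin n) (Fin n) ℂ)
    (hφ : IsPosMap φ) (hunital : φ 1 = 1)
    (hirr : ∀ Y : Matrix (Fin n) (Fin n) ℂ,
      (∀ a : Matrix (Fin m) (Fin m) ℂ, Y * φ a = φ a * Y) → ∃ c : ℂ, Y = c • 1)
    (hψ : IsPosMap ψ)
    (X : Matrix (Fin n) (Fin n) ℂ)
    (hX : ∀ a : Matrix (Fin m) (Fin m) ℂ, ψ a = X * φ a) :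
    ∃ lam : ℝ, 0 ≤ lam ∧ X = (lam : ℂ) • 1 ∧ ψ = (lam : ℂ) • φ := by
  have hX1 : X = ψ 1 := by rw [hX 1, hunital, mul_one]
  have hXpsd : X.PosSemidef := hX1 ▸ hψ 1 Matrix.PosSemidef.one
  have hXherm : Xᴴ = X := hXpsd.isHermitian
  -- X commutes with φ a for Hermitian a
  have hcommH : ∀ a : Matrix (Fin m) (Fin m) ℂ, a.IsHermitian → X * φ a = φ a * X := by
    intro a ha
    have h1 : (ψ a)ᴴ = ψ a := isPosMap_isHermitian hψ ha
    have h2 : (φ a)ᴴ = φ a := isPosMap_isHermitian hφ ha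
    calc X * φ a = ψ a := (hX a).symm
    _ = (ψ a)ᴴ := h1.symm
    _ = (X * φ a)ᴴ := by rw [hX a]
    _ = (φ a)ᴴ * Xᴴ := Matrix.conjTranspose_mul X (φ a)
    _ = φ a * X := by rw [h2, hXherm]
  have hcomm : ∀ a : Matrix (Fin m) (Fin m) ℂ, X * φ a = φ a * X := by
    intro a
    have hh : (a + aᴴ).IsHermitian := by
      unfold Matrix.IsHermitian
      rw [Matrix.conjTranspose_add, Matrix.conjTranspose_conjTranspose, add_comm]
    have hk : ((-(Complex.I) / 2 : ℂ) • (a - aᴴ)).IsHermitian := by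
      unfold Matrix.IsHermitian
      rw [Matrix.conjTranspose_smul, Matrix.conjTranspose_sub, Matrix.conjTranspose_conjTranspose]
      have h1 : (star (-(Complex.I) / 2) : ℂ) = Complex.I / 2 := by simp [Complex.ext_iff]
      rw [h1]
      module
    have hI : Complex.I * (-(Complex.I) / 2) = (1 / 2 : ℂ) := by
      calc Complex.I * (-(Complex.I) / 2) = -(Complex.I * Complex.I) / 2 := by ring
      _ = (1 / 2 : ℂ) := by rw [Complex.I_mul_I]; norm_num
    have hdecomp : a = (1 / 2 : ℂ) • (a + aᴴ) + Complex.I • ((-(Complex.I) / 2 : ℂ) • (a - aᴴ)) := by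
      rw [smul_smul, hI]
      module
    have h1 := hcommH _ hh
    have h2 := hcommH _ hk
    conv_lhs => rw [hdecomp]
    conv_rhs => rw [hdecomp]
    rw [map_add, LinearMap.map_smul, LinearMap.map_smul, mul_add, add_mul,
      Matrix.mul_smul, Matrix.mul_smul, Matrix.smul_mul, Matrix.smul_mul, h1, h2]
  obtain ⟨c, hc⟩ := hirr X hcomm
  rcases Nat.eq_zero_or_pos n with hn | hn
  · refine ⟨0, le_refl 0, ?_, ?_⟩
    · subst hn; exact Subsingleton.elim _ _
    · subst hn
      ext a i j
      exact absurd i.2 (by omega)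
  · have i0 : Fin n := ⟨0, hn⟩
    have hXii : X i0 i0 = c := by
      rw [hc]; simp
    have hcnn : 0 ≤ c := by
      rw [← hXii]
      have := hXpsd.dotProduct_mulVec_nonneg (Pi.single i0 1)
      simpa [Matrix.mulVec_single, dotProduct, Pi.single_apply, Finset.sum_ite_eq,
        mul_comm] using this
    rw [Complex.le_def] at hcnn
    have him : c.im = 0 := by simpa using hcnn.2.symm
    have hre : 0 ≤ c.re := by simpa using hcnn.1
    have hcre : ((c.re : ℝ) : ℂ) = c := Complex.ext (by simp) (by simp [him])
    refine ⟨c.re, hre, ?_, ?_⟩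
    · rw [hc, hcre]
    · ext a i j
      rw [LinearMap.smul_apply, hX a, hc, Matrix.smul_mul, one_mul, hcre]

end
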